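/- Assume r satisfies gcd(r, det P) = 1 and ξ ∈ ℂ is a primitive r-th root of unity. For λ, μ ∈ ρ + ℤ^ℓ set S(λ,μ) := ∑_{w ∈ W} det(w)·ξ^{B(μ, w·λ) − B(ρ,ρ)} (the exponent is an integer). Then for all λ, ν ∈ ρ + ℤ^ℓ one has ∑_{k ∈ {0,…,r−1}^ℓ} S(λ, ρ+k) · \overline{S(ν, ρ+k)} = r^ℓ · ∑ det(w)·det(w'), where the last sum runs over all pairs (w, w') ∈ W × W with w·λ − w'·ν ∈ rℤ^ℓ, and the bar denotes complex conjugation. -/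

import Mathlib

/-- Cast an integer vector to a rational vector. -/
def intVecQ {l : ℕ} (x : Fin l → ℤ) : Fin l → ℚ := fun i => (x i : ℚ)

/-- Cast a vector of residues `k ∈ {0,…,r−1}^l` to a rational vector. -/
def finVecQ {l r : ℕ} (k : Fin l → Fin r) : Fin l → ℚ := fun i => ((k i : ℕ) : ℚ)

/-- The determinant of an element of `GL_l(ℤ)`. -/
def glDet {l : ℕ} (w : Matrix.GeneralLinearGroup (Fin l) ℤ) : ℤ :=
  Matrix.det (w : Matrix (Fin l) (Fin l) ℤ)

/-- The action of an element of `GL_l(ℤ)` on `ℚ^l`. -/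
def glAct {l : ℕ} (w : Matrix.GeneralLinearGroup (Fin l) ℤ) (x : Fin l → ℚ) : Fin l → ℚ :=
  Matrix.mulVec ((w : Matrix (Fin l) (Fin l) ℤ).map fun z => (z : ℚ)) x



lemma zpowSumAux {ι : Type*} (ξ : ℂ) (h : ξ ≠ 0) (s : Finset ι) (f : ι → ℤ) :
    ξ ^ (∑ i ∈ s, f i) = ∏ i ∈ s, ξ ^ f i := by
  induction s using Finset.cons_induction with
  | empty => simp
  | cons a s ha ih => rw [Finset.sum_cons, Finset.prod_cons, zpow_add₀ h, ih]

lemma geomAux {r : ℕ} (hr : 0 < r) {ξ : ℂ} (hξ : IsPrimitiveRoot ξ r) (c : ℤ) :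
    ∑ j : Fin r, (ξ ^ c) ^ (j : ℕ) = if (r : ℤ) ∣ c then (r : ℂ) else 0 := by
  have hxr : (ξ ^ c) ^ r = 1 := by
    rw [← zpow_natCast (ξ ^ c), ← zpow_mul, mul_comm, zpow_mul, zpow_natCast, hξ.pow_eq_one,
      one_zpow]
  by_cases h : (r : ℤ) ∣ c
  · rw [if_pos h, (hξ.zpow_eq_one_iff_dvd c).2 h]
    simp
  · rw [if_neg h]
    have hne : ξ ^ c ≠ 1 := fun hc => h ((hξ.zpow_eq_one_iff_dvd c).1 hc)
    rw [Fin.sum_univ_eq_sum_range (fun i => (ξ ^ c) ^ i) r, geom_sum_eq hne, hxr]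
    simp

lemma charSum {l r : ℕ} (hr : 0 < r) {ξ : ℂ} (hξ : IsPrimitiveRoot ξ r)
    (m : ℤ) (c : Fin l → ℤ) :
    ∑ k : Fin l → Fin r, ξ ^ (m + ∑ i, (k i : ℤ) * c i)
      = if ∀ i, (r : ℤ) ∣ c i then ξ ^ m * (r : ℂ) ^ l else 0 := by
  have hξ0 : ξ ≠ 0 := hξ.ne_zero hr.ne'
  have step : ∀ k : Fin l → Fin r,
      ξ ^ (m + ∑ i, (k i : ℤ) * c i) = ξ ^ m * ∏ i, (ξ ^ (c i)) ^ ((k i : ℕ)) := by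
    intro k
    rw [zpow_add₀ hξ0, zpowSumAux ξ hξ0]
    congr 1
    refine Finset.prod_congr rfl fun i _ => ?_
    rw [← zpow_natCast (ξ ^ c i), ← zpow_mul, mul_comm]
  simp only [step]
  rw [← Finset.mul_sum]
  have : ∑ k : Fin l → Fin r, ∏ i, (ξ ^ (c i)) ^ ((k i : ℕ))
      = ∏ i, ∑ j : Fin r, (ξ ^ (c i)) ^ ((j : ℕ)) := by
    rw [Finset.prod_univ_sum (fun _ => (Finset.univ : Finset (Fin r)))
      (fun i j => (ξ ^ (c i)) ^ ((j : ℕ))), Fintype.piFinset_univ]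
  rw [this]
  by_cases h : ∀ i, (r : ℤ) ∣ c i
  · rw [if_pos h]
    congr 1
    rw [Finset.prod_congr rfl fun i _ => geomAux hr hξ (c i)]
    simp [h, Finset.prod_const, Finset.card_univ]
  · rw [if_neg h]
    push_neg at h
    obtain ⟨i, hi⟩ := h
    rw [Finset.prod_eq_zero (Finset.mem_univ i)]
    · ring
    · rw [geomAux hr hξ (c i), if_neg hi]


lemma dvdMulVecAux {l r : ℕ} (P : Matrix (Fin l) (Fin l) ℤ)
    (hP : IsCoprime (r : ℤ) P.det) (d : Fin l → ℤ) :
    (∀ i, (r : ℤ) ∣ P.mulVec d i) ↔ (∀ i, (r : ℤ) ∣ d i) := by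
  constructor
  · intro h
    set f := Int.castRingHom (ZMod r) with hf
    have hunit : IsUnit ((P.map f).det) := by
      rw [← RingHom.mapMatrix_apply, ← RingHom.map_det]
      obtain ⟨a, b, hab⟩ := hP
      refine IsUnit.of_mul_eq_one (f b) ?_
      have h1 : (f (a * r + b * P.det) : ZMod r) = 1 := by rw [hab]; exact map_one f
      rw [map_add, map_mul, map_mul] at h1
      have hr0 : (f (r : ℤ)) = 0 := by
        simp [hf]
      rw [hr0, mul_zero, zero_add, mul_comm] at h1
      exact h1
    have hzero : (P.map f).mulVec (fun j => f (d j)) = 0 := by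
      funext i
      have h2 : f (P.mulVec d i) = 0 := by
        simpa [hf] using (ZMod.intCast_zmod_eq_zero_iff_dvd (P.mulVec d i) r).2 (h i)
      show (P.map ⇑f).mulVec (fun j => f (d j)) i = 0
      rw [← h2]
      simp [Matrix.mulVec, dotProduct, map_sum, Matrix.map_apply]
    intro i
    have h3 : (fun j => f (d j)) = 0 := by
      have := congrArg ((P.map f)⁻¹.mulVec) hzero
      rwa [Matrix.mulVec_mulVec, Matrix.nonsing_inv_mul _ hunit, Matrix.one_mulVec,
        Matrix.mulVec_zero] at this
    have := congrFun h3 i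
    simpa [hf] using (ZMod.intCast_zmod_eq_zero_iff_dvd (d i) r).1 (by simpa [hf] using this)
  · intro h i
    simp only [Matrix.mulVec, dotProduct]
    exact Finset.dvd_sum fun j _ => Dvd.dvd.mul_left (h j) _

open scoped Classical in
/-- orthogonality relation for the `S`-matrix
`S(λ,μ) = ∑_{w ∈ W} det(w)·ξ^{B(μ,w·λ) − B(ρ,ρ)}`:
`∑_k S(λ,ρ+k)·conj(S(ν,ρ+k)) = r^ℓ · ∑_{(w,w') : w·λ − w'·ν ∈ rℤ^ℓ} det(w)·det(w')`. -/
theorem stmt10 (l r : ℕ) (hl : 0 < l) (hr : 0 < r)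
    (B : (Fin l → ℚ) →ₗ[ℚ] (Fin l → ℚ) →ₗ[ℚ] ℚ)
    (hBsymm : ∀ x y, B x y = B y x)
    (hBint : ∀ x y : Fin l → ℤ, ∃ n : ℤ, (n : ℚ) = B (intVecQ x) (intVecQ y))
    (hBeven : ∀ y : Fin l → ℤ, ∃ n : ℤ, ((2 * n : ℤ) : ℚ) = B (intVecQ y) (intVecQ y))
    (ρ : Fin l → ℚ)
    (hρ : ∀ y : Fin l → ℤ, ∃ n : ℤ, (n : ℚ) = B ρ (intVecQ y))
    (dP : ℤ)
    (hdP : (dP : ℚ) = (Matrix.of fun i j : Fin l => B (Pi.single i 1) (Pi.single j 1)).det)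
    (hdPne : dP ≠ 0) (hcop : IsCoprime (r : ℤ) dP)
    (ξ : ℂ) (hξ : IsPrimitiveRoot ξ r)
    (W : Subgroup (Matrix.GeneralLinearGroup (Fin l) ℤ)) [Fintype W]
    (hWB : ∀ (w : W) (x y : Fin l → ℚ), B (glAct (w : Matrix.GeneralLinearGroup (Fin l) ℤ) x) (glAct (w : Matrix.GeneralLinearGroup (Fin l) ℤ) y) = B x y)
    (hWρ : ∀ w : W, ∃ z : Fin l → ℤ, glAct (w : Matrix.GeneralLinearGroup (Fin l) ℤ) ρ - ρ = intVecQ z)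
    (lam nu : Fin l → ℚ)
    (hlam : ∃ a : Fin l → ℤ, lam = ρ + intVecQ a)
    (hnu : ∃ a : Fin l → ℤ, nu = ρ + intVecQ a)
    (El Ev : W → (Fin l → Fin r) → ℤ)
    (hEl : ∀ (w : W) (k : Fin l → Fin r),
      ((El w k : ℤ) : ℚ) = B (ρ + finVecQ k) (glAct (w : Matrix.GeneralLinearGroup (Fin l) ℤ) lam) - B ρ ρ)
    (hEv : ∀ (w : W) (k : Fin l → Fin r),
      ((Ev w k : ℤ) : ℚ) = B (ρ + finVecQ k) (glAct (w : Matrix.GeneralLinearGroup (Fin l) ℤ) nu) - B ρ ρ) :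
    ∑ k : Fin l → Fin r,
        (∑ w : W, ((glDet (w : Matrix.GeneralLinearGroup (Fin l) ℤ) : ℤ) : ℂ) * ξ ^ (El w k)) *
          (starRingEnd ℂ) (∑ w : W, ((glDet (w : Matrix.GeneralLinearGroup (Fin l) ℤ) : ℤ) : ℂ) * ξ ^ (Ev w k))
      = (r : ℂ) ^ l *
          ∑ p : W × W,
            if ∃ z : Fin l → ℤ,
                glAct (p.1 : Matrix.GeneralLinearGroup (Fin l) ℤ) lam - glAct (p.2 : Matrix.GeneralLinearGroup (Fin l) ℤ) nu = fun i => ((r * z i : ℤ) : ℚ)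
            then ((glDet (p.1 : Matrix.GeneralLinearGroup (Fin l) ℤ) * glDet (p.2 : Matrix.GeneralLinearGroup (Fin l) ℤ) : ℤ) : ℂ) else 0 := by
  classical
  -- basic facts about ξ
  have hξ0 : ξ ≠ 0 := hξ.ne_zero hr.ne'
  have hnorm : ‖ξ‖ = 1 := Complex.norm_eq_one_of_pow_eq_one hξ.pow_eq_one hr.ne'
  have hconj : ∀ n : ℤ, (starRingEnd ℂ) (ξ ^ n) = ξ ^ (-n) := by
    intro n
    rw [map_zpow₀, ← Complex.inv_eq_conj hnorm, inv_zpow, ← zpow_neg]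
  -- vector decomposition
  have hvec : ∀ y : Fin l → ℤ, intVecQ y = ∑ j, (y j : ℚ) • (Pi.single j (1 : ℚ) : Fin l → ℚ) := by
    intro y; funext i
    simp [intVecQ, Finset.sum_apply, Pi.single_apply, mul_ite, Finset.sum_ite_eq]
  have hsing : ∀ i : Fin l, intVecQ (Pi.single i (1 : ℤ)) = Pi.single i (1 : ℚ) := by
    intro i; funext j
    simp [intVecQ, Pi.single_apply, apply_ite (fun z : ℤ => (z : ℚ))]
  -- integral Gram matrix
  have hPzex : ∀ i j : Fin l, ∃ n : ℤ, (n : ℚ) = B (Pi.single i 1) (Pi.single j 1) := by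
    intro i j
    obtain ⟨n, hn⟩ := hBint (Pi.single i 1) (Pi.single j 1)
    exact ⟨n, by rwa [hsing, hsing] at hn⟩
  choose Pzf hPz using hPzex
  set Pz : Matrix (Fin l) (Fin l) ℤ := Matrix.of Pzf with hPzdef
  have hPz' : ∀ i j, ((Pz i j : ℤ) : ℚ) = B (Pi.single i 1) (Pi.single j 1) := hPz
  have hPzdet : Pz.det = dP := by
    have hc : ((Pz.det : ℤ) : ℚ) = (dP : ℚ) := by
      rw [hdP, show ((Pz.det : ℤ) : ℚ) = (Int.castRingHom ℚ) Pz.det from rfl,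
        RingHom.map_det]
      congr 1
      ext i j
      simp [RingHom.mapMatrix_apply, Matrix.map_apply, hPz']
    exact_mod_cast hc
  have hcop' : IsCoprime (r : ℤ) Pz.det := hPzdet ▸ hcop
  -- B with integer vectors
  have hBsecond : ∀ (x : Fin l → ℚ) (y : Fin l → ℤ),
      B x (intVecQ y) = ∑ j, (y j : ℚ) * B x (Pi.single j 1) := by
    intro x y
    rw [hvec y, map_sum]
    simp [map_smul, smul_eq_mul]
  have hBfirst : ∀ (y : Fin l → ℤ) (v : Fin l → ℚ),
      B (intVecQ y) v = ∑ j, (y j : ℚ) * B (Pi.single j 1) v := by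
    intro y v
    rw [hvec y, map_sum]
    simp [LinearMap.sum_apply, map_smul, smul_eq_mul]
  have hBmulVec : ∀ (i : Fin l) (y : Fin l → ℤ),
      B (Pi.single i 1) (intVecQ y) = ((Pz.mulVec y i : ℤ) : ℚ) := by
    intro i y
    rw [hBsecond]
    have hc : ((Pz.mulVec y i : ℤ) : ℚ) = ∑ j, (Pz i j : ℚ) * (y j : ℚ) := by
      simp [Matrix.mulVec, dotProduct]
    rw [hc]
    exact Finset.sum_congr rfl fun j _ => by rw [hPz']; ring
  -- glAct facts
  have hglInt : ∀ (w : Matrix.GeneralLinearGroup (Fin l) ℤ) (y : Fin l → ℤ),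
      glAct w (intVecQ y) = intVecQ ((w : Matrix (Fin l) (Fin l) ℤ).mulVec y) := by
    intro w y
    funext i
    simp [glAct, intVecQ, Matrix.mulVec, dotProduct, Matrix.map_apply]
  have hglAdd : ∀ (w : Matrix.GeneralLinearGroup (Fin l) ℤ) (x y : Fin l → ℚ),
      glAct w (x + y) = glAct w x + glAct w y := by
    intro w x y
    simp [glAct, Matrix.mulVec_add]
  -- difference vectors
  have hD : ∀ p : W × W, ∃ d : Fin l → ℤ,
      glAct (p.1 : Matrix.GeneralLinearGroup (Fin l) ℤ) lam
        - glAct (p.2 : Matrix.GeneralLinearGroup (Fin l) ℤ) nu = intVecQ d := by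
    rintro ⟨w, w'⟩
    obtain ⟨a, ha⟩ := hlam
    obtain ⟨b, hb⟩ := hnu
    obtain ⟨z1, hz1⟩ := hWρ w
    obtain ⟨z2, hz2⟩ := hWρ w'
    refine ⟨fun i => z1 i + ((w : Matrix.GeneralLinearGroup (Fin l) ℤ) : Matrix (Fin l) (Fin l) ℤ).mulVec a i
        - (z2 i + ((w' : Matrix.GeneralLinearGroup (Fin l) ℤ) : Matrix (Fin l) (Fin l) ℤ).mulVec b i), ?_⟩
    have e1 : glAct (w : Matrix.GeneralLinearGroup (Fin l) ℤ) lam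
        = ρ + intVecQ z1 + intVecQ (((w : Matrix.GeneralLinearGroup (Fin l) ℤ) : Matrix (Fin l) (Fin l) ℤ).mulVec a) := by
      rw [ha, hglAdd, hglInt]
      have : glAct (w : Matrix.GeneralLinearGroup (Fin l) ℤ) ρ = ρ + intVecQ z1 := by
        rw [← hz1]; ring
      rw [this]
    have e2 : glAct (w' : Matrix.GeneralLinearGroup (Fin l) ℤ) nu
        = ρ + intVecQ z2 + intVecQ (((w' : Matrix.GeneralLinearGroup (Fin l) ℤ) : Matrix (Fin l) (Fin l) ℤ).mulVec b) := by
      rw [hb, hglAdd, hglInt]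
      have : glAct (w' : Matrix.GeneralLinearGroup (Fin l) ℤ) ρ = ρ + intVecQ z2 := by
        rw [← hz2]; ring
      rw [this]
    rw [e1, e2]
    funext i
    simp [intVecQ]
    push_cast
    ring
  choose D hDspec using hD
  -- the integers m(p) = B(ρ, D p)
  have hMex : ∀ p : W × W, ∃ m : ℤ, (m : ℚ) = B ρ (intVecQ (D p)) := fun p => hρ (D p)
  choose Mm hMm using hMex
  -- exponent identity
  have hfin : ∀ k : Fin l → Fin r, finVecQ k = intVecQ (fun i => ((k i : ℕ) : ℤ)) := by
    intro k; funext i; simp [finVecQ, intVecQ]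
  have hexp : ∀ (p : W × W) (k : Fin l → Fin r),
      El p.1 k - Ev p.2 k = Mm p + ∑ i, (k i : ℤ) * Pz.mulVec (D p) i := by
    intro p k
    have hBk : B (finVecQ k) (intVecQ (D p))
        = ∑ i, ((k i : ℕ) : ℚ) * ((Pz.mulVec (D p) i : ℤ) : ℚ) := by
      rw [hfin, hBfirst]
      exact Finset.sum_congr rfl fun i _ => by rw [hBmulVec]; push_cast; ring
    have hcast : ((El p.1 k - Ev p.2 k : ℤ) : ℚ)
        = ((Mm p + ∑ i, (k i : ℤ) * Pz.mulVec (D p) i : ℤ) : ℚ) := by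
      push_cast
      rw [hEl, hEv]
      have : B (ρ + finVecQ k) (glAct (p.1 : Matrix.GeneralLinearGroup (Fin l) ℤ) lam)
            - B (ρ + finVecQ k) (glAct (p.2 : Matrix.GeneralLinearGroup (Fin l) ℤ) nu)
          = B (ρ + finVecQ k) (intVecQ (D p)) := by
        rw [← map_sub, hDspec p]
      have h2 : B (ρ + finVecQ k) (intVecQ (D p))
          = B ρ (intVecQ (D p)) + B (finVecQ k) (intVecQ (D p)) := by
        rw [map_add, LinearMap.add_apply]
      rw [sub_sub_sub_cancel_right, this, h2, ← hMm p, hBk]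
    exact_mod_cast hcast
  -- divisibility of m when condition holds
  have hmm : ∀ p : W × W, (∀ i, (r : ℤ) ∣ Pz.mulVec (D p) i) → (r : ℤ) ∣ Mm p := by
    intro p hc
    have hd : ∀ i, (r : ℤ) ∣ D p i := (dvdMulVecAux Pz hcop' (D p)).1 hc
    choose z hz using hd
    obtain ⟨m', hm'⟩ := hρ z
    refine ⟨m', ?_⟩
    have hiv : intVecQ (D p) = (r : ℚ) • intVecQ z := by
      funext i
      simp [intVecQ, hz i]
    have : (Mm p : ℚ) = ((r : ℤ) * m' : ℤ) := by
      rw [hMm p, hiv, map_smul, smul_eq_mul, ← hm']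
      push_cast
      ring
    exact_mod_cast this
  -- equivalence of the two conditions
  have hcond : ∀ p : W × W,
      (∃ z : Fin l → ℤ,
          glAct (p.1 : Matrix.GeneralLinearGroup (Fin l) ℤ) lam
            - glAct (p.2 : Matrix.GeneralLinearGroup (Fin l) ℤ) nu
            = fun i => ((r * z i : ℤ) : ℚ))
        ↔ ∀ i, (r : ℤ) ∣ Pz.mulVec (D p) i := by
    intro p
    rw [dvdMulVecAux Pz hcop' (D p)]
    constructor
    · rintro ⟨z, hz⟩ i
      have h1 : intVecQ (D p) = fun i => ((r * z i : ℤ) : ℚ) := by rw [← hDspec p, hz]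
      have h2 : ((D p i : ℤ) : ℚ) = ((r * z i : ℤ) : ℚ) := congrFun h1 i
      exact ⟨z i, by exact_mod_cast h2⟩
    · intro h
      choose z hz using h
      refine ⟨z, ?_⟩
      rw [hDspec p]
      funext i
      simp [intVecQ, hz i]
  -- per-pair character sum
  have hksum : ∀ p : W × W,
      ∑ k : Fin l → Fin r, ξ ^ (El p.1 k - Ev p.2 k)
        = if ∀ i, (r : ℤ) ∣ Pz.mulVec (D p) i then (r : ℂ) ^ l else 0 := by
    intro p
    have h1 : ∑ k : Fin l → Fin r, ξ ^ (El p.1 k - Ev p.2 k)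
        = ∑ k : Fin l → Fin r, ξ ^ (Mm p + ∑ i, (k i : ℤ) * Pz.mulVec (D p) i) :=
      Finset.sum_congr rfl fun k _ => by rw [hexp p k]
    rw [h1, charSum hr hξ]
    split_ifs with h
    · rw [(hξ.zpow_eq_one_iff_dvd _).2 (hmm p h), one_mul]
    · rfl
  have hconjsum : ∀ k : Fin l → Fin r,
      (starRingEnd ℂ) (∑ w : W, ((glDet (w : Matrix.GeneralLinearGroup (Fin l) ℤ) : ℤ) : ℂ) * ξ ^ Ev w k)
        = ∑ w : W, ((glDet (w : Matrix.GeneralLinearGroup (Fin l) ℤ) : ℤ) : ℂ) * ξ ^ (-(Ev w k)) := by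
    intro k
    rw [map_sum]
    exact Finset.sum_congr rfl fun w _ => by rw [map_mul, map_intCast, hconj]
  calc ∑ k : Fin l → Fin r,
        (∑ w : W, ((glDet (w : Matrix.GeneralLinearGroup (Fin l) ℤ) : ℤ) : ℂ) * ξ ^ El w k) *
          (starRingEnd ℂ) (∑ w : W, ((glDet (w : Matrix.GeneralLinearGroup (Fin l) ℤ) : ℤ) : ℂ) * ξ ^ Ev w k)
      = ∑ k : Fin l → Fin r, ∑ p : W × W,
          (((glDet (p.1 : Matrix.GeneralLinearGroup (Fin l) ℤ) : ℤ) : ℂ)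
            * ((glDet (p.2 : Matrix.GeneralLinearGroup (Fin l) ℤ) : ℤ) : ℂ))
            * ξ ^ (El p.1 k - Ev p.2 k) := by
        refine Finset.sum_congr rfl fun k _ => ?_
        rw [hconjsum k, Finset.sum_mul_sum, Fintype.sum_prod_type]
        refine Finset.sum_congr rfl fun w _ => Finset.sum_congr rfl fun w' _ => ?_
        rw [mul_mul_mul_comm, ← zpow_add₀ hξ0, ← sub_eq_add_neg]
    _ = ∑ p : W × W,
          (((glDet (p.1 : Matrix.GeneralLinearGroup (Fin l) ℤ) : ℤ) : ℂ)
            * ((glDet (p.2 : Matrix.GeneralLinearGroup (Fin l) ℤ) : ℤ) : ℂ))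
            * ∑ k : Fin l → Fin r, ξ ^ (El p.1 k - Ev p.2 k) := by
        rw [Finset.sum_comm]
        exact Finset.sum_congr rfl fun p _ => (Finset.mul_sum _ _ _).symm
    _ = (r : ℂ) ^ l * ∑ p : W × W,
          if ∃ z : Fin l → ℤ,
              glAct (p.1 : Matrix.GeneralLinearGroup (Fin l) ℤ) lam
                - glAct (p.2 : Matrix.GeneralLinearGroup (Fin l) ℤ) nu
                = fun i => ((r * z i : ℤ) : ℚ)
          then ((glDet (p.1 : Matrix.GeneralLinearGroup (Fin l) ℤ)
              * glDet (p.2 : Matrix.GeneralLinearGroup (Fin l) ℤ) : ℤ) : ℂ) else 0 := by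
        rw [Finset.mul_sum]
        refine Finset.sum_congr rfl fun p _ => ?_
        rw [hksum p]
        by_cases h : ∀ i, (r : ℤ) ∣ Pz.mulVec (D p) i
        · rw [if_pos h, if_pos ((hcond p).2 h)]
          push_cast
          ring
        · rw [if_neg h, if_neg (fun hh => h ((hcond p).1 hh)), mul_zero, mul_zero]
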